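/- (Cardinality of the no-reception scenarios, Remark 3.) Let d̄, τ̄, n_y be natural numbers with τ̄ ≥ d̄ and n_y ≥ 1. Consider the set of functions f : Fin n_y → Fin (τ̄ + 1) → Option ℕ such that (i) for all s, m, δ, if f s m = some δ then δ ≤ min m d̄, and (ii) for all s and m, f s m ≠ some m (no measurement is accepted exactly at the current time instant). Then this set is finite and its cardinality equals ((d̄ + 1)! · (d̄ + 2)^{τ̄ − d̄})^{n_y}; equivalently, it equals the cardinality ((d̄ + 2)! · (d̄ + 2)^{τ̄ − d̄})^{n_y} of the full reception-scenario set divided by (d̄ + 2)^{n_y}. -/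
import Mathlib

/-- Helper equivalence: a subtype of `Option ℕ` whose `some` values are exactly
those below `n` is equivalent to `Option (Fin n)`. -/
def stmt14OptEquiv (Q : Option ℕ → Prop) (n : ℕ) (hnone : Q none)
    (hsome : ∀ δ, Q (some δ) ↔ δ < n) : {o : Option ℕ // Q o} ≃ Option (Fin n) where
  toFun x := match x with
    | ⟨none, _⟩ => none
    | ⟨some δ, h⟩ => some ⟨δ, (hsome δ).1 h⟩
  invFun o := match o with
    | none => ⟨none, hnone⟩
    | some i => ⟨some (i : ℕ), (hsome i).2 i.isLt⟩
  left_inv := by rintro ⟨(_ | δ), h⟩ <;> rfl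
  right_inv := by rintro (_ | i) <;> rfl

/-- Cardinality of the no-reception scenarios (Remark 3 of the paper, case `τ̄ ≥ d̄`):
the set of reception histories `f : Fin n_y → Fin (τ̄+1) → Option ℕ` (with
`f s m = some δ → δ ≤ min m d̄`) in which no measurement is accepted exactly at the
current instant (`f s m ≠ some m`) is finite with cardinality
`((d̄+1)! * (d̄+2)^(τ̄-d̄))^{n_y}`, which equals the cardinality
`((d̄+2)! * (d̄+2)^(τ̄-d̄))^{n_y}` of the full reception-scenario set divided by
`(d̄+2)^{n_y}`. -/
theorem stmt_14 (dbar τbar ny : ℕ) (hτ : dbar ≤ τbar) (hny : 1 ≤ ny) :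
    ({f : Fin ny → Fin (τbar + 1) → Option ℕ |
        (∀ (s : Fin ny) (m : Fin (τbar + 1)) (δ : ℕ),
          f s m = some δ → δ ≤ min (m : ℕ) dbar) ∧
        (∀ (s : Fin ny) (m : Fin (τbar + 1)), f s m ≠ some (m : ℕ))}).Finite ∧
    Nat.card {f : Fin ny → Fin (τbar + 1) → Option ℕ |
        (∀ (s : Fin ny) (m : Fin (τbar + 1)) (δ : ℕ),
          f s m = some δ → δ ≤ min (m : ℕ) dbar) ∧
        (∀ (s : Fin ny) (m : Fin (τbar + 1)), f s m ≠ some (m : ℕ))}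
      = ((Nat.factorial (dbar + 1)) * (dbar + 2) ^ (τbar - dbar)) ^ ny ∧
    Nat.card {f : Fin ny → Fin (τbar + 1) → Option ℕ |
        (∀ (s : Fin ny) (m : Fin (τbar + 1)) (δ : ℕ),
          f s m = some δ → δ ≤ min (m : ℕ) dbar) ∧
        (∀ (s : Fin ny) (m : Fin (τbar + 1)), f s m ≠ some (m : ℕ))}
      = ((Nat.factorial (dbar + 2)) * (dbar + 2) ^ (τbar - dbar)) ^ ny
          / (dbar + 2) ^ ny := by
  -- the per-coordinate predicate
  set P : Fin (τbar + 1) → Option ℕ → Prop := fun m o =>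
    (∀ δ : ℕ, o = some δ → δ ≤ min (m : ℕ) dbar) ∧ o ≠ some (m : ℕ) with hP
  -- per-coordinate count of `some` values
  set cnt : Fin (τbar + 1) → ℕ := fun m =>
    if (m : ℕ) ≤ dbar then (m : ℕ) else dbar + 1 with hcnt
  have hnone : ∀ m, P m none := by
    intro m
    simp only [hP]
    refine ⟨fun δ h => ?_, ?_⟩
    · cases h
    · simp
  have hsome : ∀ m (δ : ℕ), P m (some δ) ↔ δ < cnt m := by
    intro m δ
    rcases le_or_gt (m : ℕ) dbar with hc | hc
    · simp only [hP, hcnt, Option.some.injEq, if_pos hc]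
      constructor
      · rintro ⟨h1, h2⟩
        rw [Ne, Option.some.injEq] at h2
        have h3 := h1 δ rfl
        have h4 : δ ≤ (m : ℕ) := h3.trans (min_le_left _ _)
        omega
      · intro h
        refine ⟨fun δ' hδ' => le_min (by omega) (by omega), ?_⟩
        rw [Ne, Option.some.injEq]
        omega
    · simp only [hP, hcnt, Option.some.injEq, if_neg (not_le.mpr hc)]
      constructor
      · rintro ⟨h1, h2⟩
        rw [Ne, Option.some.injEq] at h2
        have h3 := h1 δ rfl
        have h4 : δ ≤ dbar := h3.trans (min_le_right _ _)
        omega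
      · intro h
        refine ⟨fun δ' hδ' => le_min (by omega) (by omega), ?_⟩
        rw [Ne, Option.some.injEq]
        omega
  -- the set, rewritten coordinatewise
  have hset : {f : Fin ny → Fin (τbar + 1) → Option ℕ |
        (∀ (s : Fin ny) (m : Fin (τbar + 1)) (δ : ℕ),
          f s m = some δ → δ ≤ min (m : ℕ) dbar) ∧
        (∀ (s : Fin ny) (m : Fin (τbar + 1)), f s m ≠ some (m : ℕ))}
      = {f : Fin ny → Fin (τbar + 1) → Option ℕ | ∀ s m, P m (f s m)} := by
    ext f
    simp only [Set.mem_setOf_eq, hP]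
    constructor
    · rintro ⟨h1, h2⟩ s m
      exact ⟨fun δ hδ => h1 s m δ hδ, h2 s m⟩
    · intro h
      exact ⟨fun s m δ hδ => (h s m).1 δ hδ, fun s m => (h s m).2⟩
  -- the equivalence with a finite product type
  have e : {f : Fin ny → Fin (τbar + 1) → Option ℕ |
        (∀ (s : Fin ny) (m : Fin (τbar + 1)) (δ : ℕ),
          f s m = some δ → δ ≤ min (m : ℕ) dbar) ∧
        (∀ (s : Fin ny) (m : Fin (τbar + 1)), f s m ≠ some (m : ℕ))} ≃
      ∀ _ : Fin ny, ∀ m : Fin (τbar + 1), Option (Fin (cnt m)) := by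
    refine (Equiv.setCongr hset).trans ?_
    refine (Equiv.subtypePiEquivPi
      (p := fun (s : Fin ny) (g : Fin (τbar + 1) → Option ℕ) => ∀ m, P m (g m))).trans ?_
    refine Equiv.piCongrRight fun s => ?_
    refine (Equiv.subtypePiEquivPi (p := fun m o => P m o)).trans ?_
    exact Equiv.piCongrRight fun m => stmt14OptEquiv (P m) (cnt m) (hnone m) (hsome m)
  have hfin : ({f : Fin ny → Fin (τbar + 1) → Option ℕ |
        (∀ (s : Fin ny) (m : Fin (τbar + 1)) (δ : ℕ),
          f s m = some δ → δ ≤ min (m : ℕ) dbar) ∧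
        (∀ (s : Fin ny) (m : Fin (τbar + 1)), f s m ≠ some (m : ℕ))}).Finite := by
    rw [← Set.finite_coe_iff]
    exact Finite.of_equiv _ e.symm
  -- compute the product over one sensor
  have hprod : ∏ m : Fin (τbar + 1), (cnt m + 1)
      = Nat.factorial (dbar + 1) * (dbar + 2) ^ (τbar - dbar) := by
    have h1 : ∏ m : Fin (τbar + 1), (cnt m + 1)
        = ∏ i ∈ Finset.range (τbar + 1),
            ((if i ≤ dbar then i else dbar + 1) + 1) := by
      rw [Fin.prod_univ_eq_prod_range (fun i => ((if i ≤ dbar then i else dbar + 1) + 1))]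
    rw [h1]
    have h2 : τbar + 1 = (dbar + 1) + (τbar - dbar) := by omega
    rw [h2, Finset.prod_range_add]
    have h3 : ∏ i ∈ Finset.range (dbar + 1),
        ((if i ≤ dbar then i else dbar + 1) + 1) = Nat.factorial (dbar + 1) := by
      rw [Finset.prod_congr rfl (fun i hi => by
        rw [if_pos (by simpa using Nat.lt_succ_iff.mp (Finset.mem_range.mp hi))])]
      exact Finset.prod_range_add_one_eq_factorial (dbar + 1)
    have h4 : ∏ i ∈ Finset.range (τbar - dbar),
        ((if dbar + 1 + i ≤ dbar then dbar + 1 + i else dbar + 1) + 1)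
        = (dbar + 2) ^ (τbar - dbar) := by
      rw [Finset.prod_congr rfl (fun i _ => by rw [if_neg (by omega)])]
      simp [Finset.prod_const]
    rw [h3, h4]
  have hcard : Nat.card {f : Fin ny → Fin (τbar + 1) → Option ℕ |
        (∀ (s : Fin ny) (m : Fin (τbar + 1)) (δ : ℕ),
          f s m = some δ → δ ≤ min (m : ℕ) dbar) ∧
        (∀ (s : Fin ny) (m : Fin (τbar + 1)), f s m ≠ some (m : ℕ))}
      = ((Nat.factorial (dbar + 1)) * (dbar + 2) ^ (τbar - dbar)) ^ ny := by
    rw [Nat.card_congr e, Nat.card_eq_fintype_card]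
    simp only [Fintype.card_pi, Fintype.card_option, Fintype.card_fin]
    rw [Finset.prod_const, hprod]
    simp
  refine ⟨hfin, hcard, ?_⟩
  have hfac : Nat.factorial (dbar + 2) = (dbar + 2) * Nat.factorial (dbar + 1) :=
    Nat.factorial_succ (dbar + 1)
  have hdiv : ((Nat.factorial (dbar + 2)) * (dbar + 2) ^ (τbar - dbar)) ^ ny
      / (dbar + 2) ^ ny
      = ((Nat.factorial (dbar + 1)) * (dbar + 2) ^ (τbar - dbar)) ^ ny := by
    rw [hfac, mul_assoc, mul_pow]
    exact Nat.mul_div_cancel_left _ (pow_pos (Nat.succ_pos (dbar + 1)) ny)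
  rw [hcard, hdiv]
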